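/- arXiv:1006.1358 — 3 statements merged into one kernel-verified Lean document; each statement's English description precedes it below -/
import Mathlib

section
/- Let Δ be a Hermitian matrix with positive and negative parts Δ₊ and Δ₋ (positive semidefinite matrices with disjoint supports, Δ = Δ₊ − Δ₋). If E is a trace-preserving positive linear map on matrices such that ‖E(Δ)‖₁ = ‖Δ‖₁ (where ‖·‖₁ is the trace norm), then E(Δ₊) and E(Δ₋) have disjoint (orthogonal) supports. -/
open Matrix
open scoped ComplexOrder

/-- The positive semidefinite square root, as `Matrix.PosSemidef.sqrt` was defined in older
Mathlib (removed since). -/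
noncomputable def Matrix.PosSemidef.sqrt {n : Type*} [Fintype n] [DecidableEq n]
    {A : Matrix n n ℂ} (hA : A.PosSemidef) : Matrix n n ℂ :=
  hA.isHermitian.eigenvectorUnitary.1 * diagonal ((↑) ∘ (√·) ∘ hA.isHermitian.eigenvalues) *
  (star hA.isHermitian.eigenvectorUnitary : Matrix n n ℂ)

section SqrtAux
open scoped MatrixOrder

lemma Matrix.PosSemidef.sqrt_eq_cfc {n : Type*} [Fintype n] [DecidableEq n]
    {A : Matrix n n ℂ} (hA : A.PosSemidef) : hA.sqrt = CFC.sqrt A := by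
  rw [CFC.sqrt_eq_cfc, cfc_nnreal_eq_real _ A, hA.1.cfc_eq, IsHermitian.cfc, Unitary.conjStarAlgAut_apply, Matrix.PosSemidef.sqrt]
  congr 3
  funext x
  simp only [Function.comp_apply, Complex.coe_algebraMap, RCLike.ofReal]
  rw [Real.sqrt]

lemma Matrix.PosSemidef.posSemidef_sqrt {n : Type*} [Fintype n] [DecidableEq n]
    {A : Matrix n n ℂ} (hA : A.PosSemidef) : hA.sqrt.PosSemidef := by
  rw [hA.sqrt_eq_cfc]; exact (CFC.sqrt_nonneg A).posSemidef

lemma Matrix.PosSemidef.sqrt_mul_self {n : Type*} [Fintype n] [DecidableEq n]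
    {A : Matrix n n ℂ} (hA : A.PosSemidef) : hA.sqrt * hA.sqrt = A := by
  rw [hA.sqrt_eq_cfc]; exact CFC.sqrt_mul_sqrt_self A hA.nonneg

lemma Matrix.PosSemidef.eq_sqrt_of_sq_eq {n : Type*} [Fintype n] [DecidableEq n]
    {A B : Matrix n n ℂ} (hA : A.PosSemidef) (hB : B.PosSemidef) (h : A ^ 2 = B) :
    A = hB.sqrt := by
  rw [hB.sqrt_eq_cfc]
  exact (CFC.sqrt_unique (by rw [← sq]; exact h) hA.nonneg).symm

end SqrtAux

/-- The trace norm `‖A‖₁ = Tr √(Aᴴ A)` of a complex matrix. -/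
noncomputable def traceNorm {n : ℕ} (A : Matrix (Fin n) (Fin n) ℂ) : ℝ :=
  ((Matrix.posSemidef_conjTranspose_mul_self A).sqrt.trace).re

/-- A trace-preserving linear map. -/
def TracePreserving {n : ℕ}
    (E : Matrix (Fin n) (Fin n) ℂ →ₗ[ℂ] Matrix (Fin n) (Fin n) ℂ) : Prop :=
  ∀ X, (E X).trace = X.trace

/-- A positive map: sends PSD matrices to PSD matrices. -/
def PositiveMap {n : ℕ}
    (E : Matrix (Fin n) (Fin n) ℂ →ₗ[ℂ] Matrix (Fin n) (Fin n) ℂ) : Prop :=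
  ∀ X : Matrix (Fin n) (Fin n) ℂ, X.PosSemidef → (E X).PosSemidef

section Aux

variable {n : ℕ}




lemma trace_ctms (B : Matrix (Fin n) (Fin n) ℂ) :
    ((Bᴴ * B).trace).re = ∑ j, ∑ i, Complex.normSq (B i j) := by
  have : (Bᴴ * B).trace = ∑ j, ∑ i, (starRingEnd ℂ) (B i j) * B i j := by
    simp [Matrix.trace, Matrix.mul_apply, Matrix.diag, Matrix.conjTranspose_apply]
  rw [this]
  simp only [Complex.re_sum]
  congr 1; ext j; congr 1; ext i
  rw [mul_comm, Complex.mul_conj]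
  simp

lemma trace_ctms_re_nonneg (B : Matrix (Fin n) (Fin n) ℂ) :
    0 ≤ ((Bᴴ * B).trace).re := by
  rw [trace_ctms]
  exact Finset.sum_nonneg fun j _ => Finset.sum_nonneg fun i _ => Complex.normSq_nonneg _

lemma trace_ctms_re_eq_zero {B : Matrix (Fin n) (Fin n) ℂ}
    (h : ((Bᴴ * B).trace).re = 0) : B = 0 := by
  rw [trace_ctms] at h
  ext i j
  have h1 := (Finset.sum_eq_zero_iff_of_nonneg (fun j _ => Finset.sum_nonneg
    fun i _ => Complex.normSq_nonneg (B i j))).mp h j (Finset.mem_univ j)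
  have h2 := (Finset.sum_eq_zero_iff_of_nonneg
    (fun i _ => Complex.normSq_nonneg (B i j))).mp h1 i (Finset.mem_univ i)
  simpa using Complex.normSq_eq_zero.mp h2

/-- PSD matrix as Bᴴ * B with B = sqrt. -/
lemma psd_eq_ctms {A : Matrix (Fin n) (Fin n) ℂ} (hA : A.PosSemidef) :
    A = hA.sqrtᴴ * hA.sqrt := by
  rw [hA.posSemidef_sqrt.1, hA.sqrt_mul_self]

lemma psd_trace_re_nonneg {A : Matrix (Fin n) (Fin n) ℂ} (hA : A.PosSemidef) :
    0 ≤ (A.trace).re := by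
  rw [psd_eq_ctms hA]; exact trace_ctms_re_nonneg _

variable {n : ℕ} {H : Matrix (Fin n) (Fin n) ℂ} (hH : H.IsHermitian)

noncomputable def Dmat (hH : H.IsHermitian) (f : Fin n → ℝ) : Matrix (Fin n) (Fin n) ℂ :=
  (hH.eigenvectorUnitary : Matrix (Fin n) (Fin n) ℂ) * diagonal (Complex.ofReal ∘ f) *
    star (hH.eigenvectorUnitary : Matrix (Fin n) (Fin n) ℂ)

lemma Dmat_mul (f g : Fin n → ℝ) : Dmat hH f * Dmat hH g = Dmat hH (f * g) := by
  have h1 : star (hH.eigenvectorUnitary : Matrix (Fin n) (Fin n) ℂ) *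
      (hH.eigenvectorUnitary : Matrix (Fin n) (Fin n) ℂ) = 1 :=
    Unitary.coe_star_mul_self hH.eigenvectorUnitary
  have h2 : (diagonal (Complex.ofReal ∘ f) : Matrix (Fin n) (Fin n) ℂ) *
      diagonal (Complex.ofReal ∘ g) = diagonal (Complex.ofReal ∘ (f * g)) := by
    rw [diagonal_mul_diagonal]; exact congrArg diagonal (funext fun i => by simp)
  simp only [Dmat, mul_assoc]
  rw [← mul_assoc (star _) _, h1, one_mul, ← mul_assoc (diagonal _), h2]

lemma Dmat_herm (f : Fin n → ℝ) : (Dmat hH f).IsHermitian := by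
  have h2 : (diagonal (Complex.ofReal ∘ f) : Matrix (Fin n) (Fin n) ℂ)ᴴ =
      diagonal (Complex.ofReal ∘ f) := by
    rw [diagonal_conjTranspose]
    exact congrArg diagonal (funext fun i => by simp [Complex.conj_ofReal])
  show _ = _
  simp only [Dmat, conjTranspose_mul, conjTranspose_conjTranspose, star_eq_conjTranspose,
    h2, mul_assoc]

lemma Dmat_psd {f : Fin n → ℝ} (hf : ∀ i, 0 ≤ f i) : (Dmat hH f).PosSemidef := by
  have hd : (diagonal (Complex.ofReal ∘ f) : Matrix (Fin n) (Fin n) ℂ).PosSemidef :=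
    PosSemidef.diagonal fun i => Complex.zero_le_real.mpr (hf i)
  simpa [Dmat, star_eq_conjTranspose, mul_assoc] using
    hd.mul_mul_conjTranspose_same (hH.eigenvectorUnitary : Matrix (Fin n) (Fin n) ℂ)

lemma Dmat_trace (f : Fin n → ℝ) : (Dmat hH f).trace = ∑ i, (f i : ℂ) := by
  have h1 : star (hH.eigenvectorUnitary : Matrix (Fin n) (Fin n) ℂ) *
      (hH.eigenvectorUnitary : Matrix (Fin n) (Fin n) ℂ) = 1 :=
    Unitary.coe_star_mul_self hH.eigenvectorUnitary
  rw [Dmat, mul_assoc, trace_mul_comm, mul_assoc, h1, mul_one, trace_diagonal]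
  rfl

lemma Dmat_sub (f g : Fin n → ℝ) : Dmat hH f - Dmat hH g = Dmat hH (f - g) := by
  have h2 : (diagonal (Complex.ofReal ∘ f) : Matrix (Fin n) (Fin n) ℂ) -
      diagonal (Complex.ofReal ∘ g) = diagonal (Complex.ofReal ∘ (f - g)) := by
    rw [diagonal_sub]; exact congrArg diagonal (funext fun i => by simp)
  simp only [Dmat, ← Matrix.sub_mul, ← Matrix.mul_sub, h2]

lemma Dmat_eigenvalues : Dmat hH hH.eigenvalues = H := hH.spectral_theorem.symm

lemma Dmat_one {n : ℕ} {H : Matrix (Fin n) (Fin n) ℂ} (hH : H.IsHermitian) :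
    Dmat hH 1 = 1 := by
  have h2 : (diagonal (Complex.ofReal ∘ (1 : Fin n → ℝ)) : Matrix (Fin n) (Fin n) ℂ) = 1 := by
    rw [← diagonal_one]
    exact congrArg diagonal (funext fun i => by simp)
  rw [Dmat, h2, mul_one]
  exact (Matrix.mem_unitaryGroup_iff).mp hH.eigenvectorUnitary.2

lemma traceNorm_sub_of_orth {P M : Matrix (Fin n) (Fin n) ℂ}
    (hP : P.PosSemidef) (hM : M.PosSemidef) (h : P * M = 0) :
    traceNorm (P - M) = (P.trace).re + (M.trace).re := by
  have hMP : M * P = 0 := by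
    have := congrArg conjTranspose h
    rw [conjTranspose_mul, hP.1, hM.1, conjTranspose_zero] at this
    exact this
  have hherm : (P - M)ᴴ = P - M := by
    rw [conjTranspose_sub, hP.1, hM.1]
  have hsq : (P + M) ^ 2 = (P - M)ᴴ * (P - M) := by
    rw [hherm, pow_two, Matrix.add_mul, Matrix.mul_add, Matrix.mul_add,
      Matrix.sub_mul, Matrix.mul_sub, Matrix.mul_sub, h, hMP]
    abel
  have hPM : (P + M).PosSemidef := hP.add hM
  have := hPM.eq_sqrt_of_sq_eq (posSemidef_conjTranspose_mul_self (P - M)) hsq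
  rw [traceNorm, ← this, trace_add, Complex.add_re]

lemma orth_of_traceNorm_eq {P M : Matrix (Fin n) (Fin n) ℂ}
    (hP : P.PosSemidef) (hM : M.PosSemidef)
    (hnorm : traceNorm (P - M) = (P.trace).re + (M.trace).re) :
    P * M = 0 := by
  have hH : (P - M).IsHermitian := hP.1.sub hM.1
  set e := hH.eigenvalues with he
  set dp : Fin n → ℝ := fun i => max (e i) 0 with hdp
  set dm : Fin n → ℝ := fun i => max (-(e i)) 0 with hdm
  set p : Fin n → ℝ := fun i => if 0 < e i then 1 else 0 with hp
  set Qp := Dmat hH dp with hQp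
  set Qm := Dmat hH dm with hQm
  set Pi := Dmat hH p with hPi
  have hD0 : Dmat hH (0 : Fin n → ℝ) = 0 := by
    have h := Dmat_sub hH 1 1
    rw [sub_self, sub_self] at h
    exact h.symm
  have hQpPsd : Qp.PosSemidef := Dmat_psd hH fun i => le_max_right _ _
  have hQmPsd : Qm.PosSemidef := Dmat_psd hH fun i => le_max_right _ _
  have hQsub : Qp - Qm = P - M := by
    rw [hQp, hQm, Dmat_sub]
    have hfun : dp - dm = e := by
      funext i
      show max (e i) 0 - max (-(e i)) 0 = e i
      exact max_zero_sub_max_neg_zero_eq_self (e i)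
    rw [hfun, he, Dmat_eigenvalues]
  have hQmul : Qp * Qm = 0 := by
    rw [hQp, hQm, Dmat_mul]
    have hfun : dp * dm = 0 := by
      funext i
      show max (e i) 0 * max (-(e i)) 0 = 0
      rcases le_total (e i) 0 with h | h
      · rw [max_eq_right h, zero_mul]
      · rw [max_eq_right (neg_nonpos.mpr h), mul_zero]
    rw [hfun, hD0]
  have htn : (Qp.trace).re + (Qm.trace).re = (P.trace).re + (M.trace).re := by
    rw [← traceNorm_sub_of_orth hQpPsd hQmPsd hQmul, hQsub, hnorm]
  have htr : (Qp.trace).re - (Qm.trace).re = (P.trace).re - (M.trace).re := by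
    have h1 := congrArg Matrix.trace hQsub
    rw [trace_sub, trace_sub] at h1
    have h2 := congrArg Complex.re h1
    simpa [Complex.sub_re] using h2
  have hQpP : (Qp.trace).re = (P.trace).re := by linarith
  -- projection properties
  have h1' : p * dp = dp := by
    funext i
    show (if 0 < e i then (1:ℝ) else 0) * max (e i) 0 = max (e i) 0
    by_cases h : 0 < e i
    · rw [if_pos h, one_mul]
    · rw [if_neg h, zero_mul, max_eq_right (not_lt.mp h)]
  have h2' : p * dm = 0 := by
    funext i
    show (if 0 < e i then (1:ℝ) else 0) * max (-(e i)) 0 = 0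
    by_cases h : 0 < e i
    · rw [if_pos h, one_mul, max_eq_right (neg_nonpos.mpr h.le)]
    · rw [if_neg h, zero_mul]
  have hPiH : Pi * (P - M) = Qp := by
    rw [← hQsub, Matrix.mul_sub, hPi, hQp, hQm, Dmat_mul, Dmat_mul, h1', h2', hD0, sub_zero]
  have hPP : Pi * Pi = Pi := by
    rw [hPi, Dmat_mul]
    have hfun : p * p = p := by
      funext i
      show (if 0 < e i then (1:ℝ) else 0) * (if 0 < e i then (1:ℝ) else 0) = _
      by_cases h : 0 < e i <;> simp [hp, h]
    rw [hfun]
  set q : Fin n → ℝ := fun i => 1 - p i with hq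
  set R := Dmat hH q with hR
  have hRval : R = 1 - Pi := by
    rw [hR, hPi, ← Dmat_one hH, Dmat_sub]
    congr 1
  have hRR : R * R = R := by
    rw [hR, Dmat_mul]
    have hfun : q * q = q := by
      funext i
      show (1 - (if 0 < e i then (1:ℝ) else 0)) * (1 - (if 0 < e i then (1:ℝ) else 0)) = _
      by_cases h : 0 < e i <;> simp [hq, hp, h]
    rw [hfun]
  have hPiHerm : Piᴴ = Pi := Dmat_herm hH p
  have hRHerm : Rᴴ = R := Dmat_herm hH q
  -- key trace identity
  have hsplit : Qp = P - R * P - Pi * M := by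
    rw [← hPiH, Matrix.mul_sub]
    have : Pi * P = P - R * P := by
      rw [hRval, Matrix.sub_mul, Matrix.one_mul]
      abel
    rw [this]
  have hkey : (R * P).trace.re + (Pi * M).trace.re = 0 := by
    have h1 := congrArg Matrix.trace hsplit
    rw [trace_sub, trace_sub] at h1
    have h2 := congrArg Complex.re h1
    simp only [Complex.sub_re] at h2
    linarith [hQpP, h2]
  -- nonnegativity of each term
  have ePi : (hM.sqrt * Pi)ᴴ * (hM.sqrt * Pi) = Pi * M * Pi := by
    rw [conjTranspose_mul, hPiHerm, hM.posSemidef_sqrt.1, mul_assoc, ← mul_assoc hM.sqrt,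
      hM.sqrt_mul_self, ← mul_assoc]
  have ePitr : (Pi * M * Pi).trace = (Pi * M).trace := by
    rw [trace_mul_cycle, hPP]
  have eR : (hP.sqrt * R)ᴴ * (hP.sqrt * R) = R * P * R := by
    rw [conjTranspose_mul, hRHerm, hP.posSemidef_sqrt.1, mul_assoc, ← mul_assoc hP.sqrt,
      hP.sqrt_mul_self, ← mul_assoc]
  have eRtr : (R * P * R).trace = (R * P).trace := by
    rw [trace_mul_cycle, hRR]
  have hPiMnn : 0 ≤ (Pi * M).trace.re := by
    rw [← ePitr, ← ePi]; exact trace_ctms_re_nonneg _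
  have hRPnn : 0 ≤ (R * P).trace.re := by
    rw [← eRtr, ← eR]; exact trace_ctms_re_nonneg _
  have hPiM0 : (Pi * M).trace.re = 0 := by linarith
  have hRP0 : (R * P).trace.re = 0 := by linarith
  -- conclude matrix products vanish
  have hsqM : hM.sqrt * Pi = 0 := by
    apply trace_ctms_re_eq_zero
    rw [ePi, ePitr]; exact hPiM0
  have hMPi : M * Pi = 0 := by
    rw [← hM.sqrt_mul_self, mul_assoc, hsqM, mul_zero]
  have hPiM : Pi * M = 0 := by
    have := congrArg conjTranspose hMPi
    rwa [conjTranspose_mul, hPiHerm, hM.1, conjTranspose_zero] at this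
  have hsqP : hP.sqrt * R = 0 := by
    apply trace_ctms_re_eq_zero
    rw [eR, eRtr]; exact hRP0
  have hPR : P * R = 0 := by
    rw [← hP.sqrt_mul_self, mul_assoc, hsqP, mul_zero]
  have hPPi : P = P * Pi := by
    rw [hRval, Matrix.mul_sub, Matrix.mul_one] at hPR
    exact sub_eq_zero.mp hPR

  calc P * M = P * Pi * M := by rw [← hPPi]
    _ = P * (Pi * M) := by rw [mul_assoc]
    _ = 0 := by rw [hPiM, mul_zero]

end Aux

/-- If a trace-preserving positive map preserves the trace norm of a Hermitian
matrix `Δ = Δ₊ − Δ₋` (with `Δ₊, Δ₋` PSD with disjoint supports), then the images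
`E(Δ₊)` and `E(Δ₋)` have disjoint supports. -/
theorem preserved_implies_disjoint_supports {n : ℕ}
    (E : Matrix (Fin n) (Fin n) ℂ →ₗ[ℂ] Matrix (Fin n) (Fin n) ℂ)
    (hTP : TracePreserving E) (hPos : PositiveMap E)
    (Δ Δp Δm : Matrix (Fin n) (Fin n) ℂ)
    (hΔp : Δp.PosSemidef) (hΔm : Δm.PosSemidef)
    (hdisj : Δp * Δm = 0) (hΔ : Δ = Δp - Δm)
    (hnorm : traceNorm (E Δ) = traceNorm Δ) :
    (E Δp) * (E Δm) = 0 := by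
  have hP : (E Δp).PosSemidef := hPos Δp hΔp
  have hM : (E Δm).PosSemidef := hPos Δm hΔm
  have hEΔ : E Δ = E Δp - E Δm := by rw [hΔ, map_sub]
  have h1 : traceNorm Δ = (Δp.trace).re + (Δm.trace).re := by
    rw [hΔ]; exact traceNorm_sub_of_orth hΔp hΔm hdisj
  have h2 : traceNorm (E Δp - E Δm) = ((E Δp).trace).re + ((E Δm).trace).re := by
    rw [← hEΔ, hnorm, h1, hTP Δp, hTP Δm]
  exact orth_of_traceNorm_eq hP hM h2
end

section
/- Let E be a trace-preserving completely positive map on M_n(ℂ) with Kraus operators {K_i} (so E(ρ) = Σᵢ K_i ρ K_i†, Σᵢ K_i† K_i = 1), and suppose E has a fixed point ρ₀ that is positive definite. Then a matrix X satisfies E†(X) = X (where E†(X) = Σᵢ K_i† X K_i) if and only if [X, K_i] = 0 for all i. -/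
open Matrix
open scoped ComplexOrder

private lemma trace_mul_conjTranspose_self_nonneg' {m n : ℕ}
    (M : Matrix (Fin m) (Fin n) ℂ) (i : Fin m) : 0 ≤ (M * Mᴴ).diag i := by
  rw [Matrix.diag_apply, Matrix.mul_apply]
  refine Finset.sum_nonneg fun j _ => ?_
  simp only [Matrix.conjTranspose_apply]
  exact mul_star_self_nonneg _

private lemma trace_mul_conjTranspose_self_nonneg {m n : ℕ}
    (M : Matrix (Fin m) (Fin n) ℂ) : 0 ≤ (M * Mᴴ).trace :=
  Finset.sum_nonneg fun i _ => trace_mul_conjTranspose_self_nonneg' M i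

private lemma trace_mul_conjTranspose_self_eq_zero {m n : ℕ}
    {M : Matrix (Fin m) (Fin n) ℂ} (h : (M * Mᴴ).trace = 0) : M = 0 := by
  rw [Matrix.trace] at h
  have h2 := (Finset.sum_eq_zero_iff_of_nonneg
    (fun i _ => trace_mul_conjTranspose_self_nonneg' M i)).1 h
  ext i j
  have := h2 i (Finset.mem_univ i)
  rw [Matrix.diag_apply, Matrix.mul_apply] at this
  have h3 := (Finset.sum_eq_zero_iff_of_nonneg (fun j _ => by
    simp only [Matrix.conjTranspose_apply]; exact mul_star_self_nonneg _)).1 this j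
    (Finset.mem_univ j)
  simp only [Matrix.conjTranspose_apply, Complex.star_def, Complex.mul_conj] at h3
  norm_cast at h3
  simpa using Complex.normSq_eq_zero.1 h3

/-- For a CPTP map `E(ρ) = Σᵢ Kᵢ ρ Kᵢᴴ` with a positive definite fixed point
`ρ₀`, a matrix `X` is fixed by the adjoint map `E†(X) = Σᵢ Kᵢᴴ X Kᵢ` iff `X`
commutes with every Kraus operator. -/
theorem fixed_points_of_adjoint_iff_commutant {n k : ℕ}
    (K : Fin k → Matrix (Fin n) (Fin n) ℂ)
    (hTP : ∑ i, (K i)ᴴ * K i = 1)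
    (ρ₀ : Matrix (Fin n) (Fin n) ℂ) (hρ₀ : ρ₀.PosDef)
    (hfix : ∑ i, K i * ρ₀ * (K i)ᴴ = ρ₀)
    (X : Matrix (Fin n) (Fin n) ℂ) :
    (∑ i, (K i)ᴴ * X * K i = X) ↔ ∀ i, X * K i = K i * X := by
  constructor
  · intro hX
    -- conjTranspose version of hX
    have hXd : ∑ i, (K i)ᴴ * Xᴴ * K i = Xᴴ := by
      have := congrArg Matrix.conjTranspose hX
      simpa [Matrix.conjTranspose_sum, Matrix.conjTranspose_mul, mul_assoc] using this
    set f : Fin k → Matrix (Fin n) (Fin n) ℂ := fun i => X * K i - K i * X with hf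
    -- the key trace identity
    have hsum : ∑ i, (f i * ρ₀ * (f i)ᴴ).trace = 0 := by
      have expand : ∀ i, (f i * ρ₀ * (f i)ᴴ).trace =
          (X * K i * ρ₀ * ((K i)ᴴ * Xᴴ)).trace - (X * K i * ρ₀ * (Xᴴ * (K i)ᴴ)).trace
          - (K i * X * ρ₀ * ((K i)ᴴ * Xᴴ)).trace
          + (K i * X * ρ₀ * (Xᴴ * (K i)ᴴ)).trace := by
        intro i
        rw [← trace_sub, ← trace_sub, ← trace_add]
        congr 1
        simp only [hf, Matrix.conjTranspose_sub, Matrix.conjTranspose_mul]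
        noncomm_ring
      rw [Finset.sum_congr rfl fun i _ => expand i]
      rw [Finset.sum_add_distrib, Finset.sum_sub_distrib, Finset.sum_sub_distrib]
      have hA : ∑ i, (X * K i * ρ₀ * ((K i)ᴴ * Xᴴ)).trace = (ρ₀ * (Xᴴ * X)).trace := by
        have : ∀ i, (X * K i * ρ₀ * ((K i)ᴴ * Xᴴ)).trace
            = ((K i * ρ₀ * (K i)ᴴ) * (Xᴴ * X)).trace := by
          intro i
          rw [show X * K i * ρ₀ * ((K i)ᴴ * Xᴴ) = X * ((K i * ρ₀ * (K i)ᴴ) * Xᴴ) by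
            noncomm_ring, trace_mul_comm, mul_assoc]
        rw [Finset.sum_congr rfl fun i _ => this i, ← trace_sum, ← Finset.sum_mul, hfix]
      have hB : ∑ i, (X * K i * ρ₀ * (Xᴴ * (K i)ᴴ)).trace = (X * (ρ₀ * Xᴴ)).trace := by
        have : ∀ i, (X * K i * ρ₀ * (Xᴴ * (K i)ᴴ)).trace
            = (((K i)ᴴ * X * K i) * (ρ₀ * Xᴴ)).trace := by
          intro i
          rw [show X * K i * ρ₀ * (Xᴴ * (K i)ᴴ) = (X * K i * ρ₀ * Xᴴ) * (K i)ᴴ by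
            noncomm_ring, trace_mul_comm,
            show (K i)ᴴ * (X * K i * ρ₀ * Xᴴ) = ((K i)ᴴ * X * K i) * (ρ₀ * Xᴴ) by
            noncomm_ring]
        rw [Finset.sum_congr rfl fun i _ => this i, ← trace_sum, ← Finset.sum_mul, hX]
      have hC : ∑ i, (K i * X * ρ₀ * ((K i)ᴴ * Xᴴ)).trace = (Xᴴ * (X * ρ₀)).trace := by
        have : ∀ i, (K i * X * ρ₀ * ((K i)ᴴ * Xᴴ)).trace
            = (((K i)ᴴ * Xᴴ * K i) * (X * ρ₀)).trace := by
          intro i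
          rw [show K i * X * ρ₀ * ((K i)ᴴ * Xᴴ) = (K i * X * ρ₀) * ((K i)ᴴ * Xᴴ) by
            noncomm_ring, trace_mul_comm,
            show (K i)ᴴ * Xᴴ * (K i * X * ρ₀) = ((K i)ᴴ * Xᴴ * K i) * (X * ρ₀) by
            noncomm_ring]
        rw [Finset.sum_congr rfl fun i _ => this i, ← trace_sum, ← Finset.sum_mul, hXd]
      have hD : ∑ i, (K i * X * ρ₀ * (Xᴴ * (K i)ᴴ)).trace = (X * ρ₀ * Xᴴ).trace := by
        have : ∀ i, (K i * X * ρ₀ * (Xᴴ * (K i)ᴴ)).trace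
            = (((K i)ᴴ * K i) * (X * ρ₀ * Xᴴ)).trace := by
          intro i
          rw [show K i * X * ρ₀ * (Xᴴ * (K i)ᴴ) = (K i * (X * ρ₀ * Xᴴ)) * (K i)ᴴ by
            noncomm_ring, trace_mul_comm,
            show (K i)ᴴ * (K i * (X * ρ₀ * Xᴴ)) = ((K i)ᴴ * K i) * (X * ρ₀ * Xᴴ) by
            noncomm_ring]
        rw [Finset.sum_congr rfl fun i _ => this i, ← trace_sum, ← Finset.sum_mul, hTP,
          one_mul]
      have e1 : (X * (ρ₀ * Xᴴ)).trace = (ρ₀ * (Xᴴ * X)).trace := by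
        rw [trace_mul_comm, mul_assoc]
      have e2 : (Xᴴ * (X * ρ₀)).trace = (ρ₀ * (Xᴴ * X)).trace := by
        rw [trace_mul_comm Xᴴ (X * ρ₀), mul_assoc, e1]
      have e3 : (X * ρ₀ * Xᴴ).trace = (ρ₀ * (Xᴴ * X)).trace := by
        rw [mul_assoc, e1]
      rw [hA, hB, hC, hD, e1, e2, e3]
      ring
    -- now conclude each f i = 0
    obtain ⟨s, hss, hsh⟩ : ∃ s : Matrix (Fin n) (Fin n) ℂ, s * s = ρ₀ ∧ sᴴ = s := by
      open scoped MatrixOrder in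
      exact ⟨CFC.sqrt ρ₀, CFC.sqrt_mul_sqrt_self ρ₀ hρ₀.posSemidef.nonneg,
        (CFC.sqrt_nonneg ρ₀).posSemidef.1⟩
    have hgs : ∀ i, f i * ρ₀ * (f i)ᴴ = (f i * s) * (f i * s)ᴴ := by
      intro i
      rw [Matrix.conjTranspose_mul, hsh, ← hss]
      noncomm_ring
    have hzero : ∀ i ∈ Finset.univ, (f i * ρ₀ * (f i)ᴴ).trace = 0 := by
      refine (Finset.sum_eq_zero_iff_of_nonneg fun i _ => ?_).1 hsum
      rw [hgs i]; exact trace_mul_conjTranspose_self_nonneg _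
    intro i
    have h1 : f i * s = 0 := by
      apply trace_mul_conjTranspose_self_eq_zero
      rw [← hgs i]; exact hzero i (Finset.mem_univ i)
    have h2 : f i * ρ₀ = 0 := by
      rw [← hss, ← mul_assoc, h1, Matrix.zero_mul]
    have hdet : IsUnit ρ₀.det := hρ₀.det_pos.ne'.isUnit
    have h3 : f i = 0 := by
      have := congrArg (· * ρ₀⁻¹) h2
      simpa [mul_assoc, Matrix.mul_nonsing_inv ρ₀ hdet] using this
    exact sub_eq_zero.1 h3
  · intro h
    have : ∀ i, (K i)ᴴ * X * K i = ((K i)ᴴ * K i) * X := by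
      intro i
      rw [mul_assoc, h i, ← mul_assoc]
    rw [Finset.sum_congr rfl fun i _ => this i, ← Finset.sum_mul, hTP, one_mul]
end

section
/- Let {A_i}, {D_i} be finite families of matrices (A_i: P → P, D_i: P^⊥ → P) satisfying Σᵢ A_i† D_i = 0. Then for every matrix ρ_C ≥ 0 on P^⊥ and every matrix σ: P^⊥ → P, if Σᵢ D_i ρ_C D_i† = −Σᵢ (A_i σ D_i† + D_i σ† A_i†), then Σᵢ D_i ρ_C D_i† = 0; if additionally ρ_C is positive definite, then D_i = 0 for all i. -/
open Matrix
open scoped ComplexOrder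
open scoped MatrixOrder

private lemma entry_eq_dotProduct {m n : ℕ} (B : Matrix (Fin m) (Fin n) ℂ) (j : Fin n) :
    (Bᴴ * B) j j = dotProduct (star (fun i => B i j)) (fun i => B i j) := by
  simp [Matrix.mul_apply, dotProduct, Matrix.conjTranspose_apply]

private lemma psd_trace_zero {n : ℕ} {M : Matrix (Fin n) (Fin n) ℂ}
    (hM : M.PosSemidef) (h : M.trace = 0) : M = 0 := by
  obtain ⟨B, rfl⟩ := CStarAlgebra.nonneg_iff_eq_star_mul_self.mp hM.nonneg
  rw [Matrix.star_eq_conjTranspose, Matrix.conjTranspose_mul_self_eq_zero]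
  have hdiag : ∀ j ∈ Finset.univ, (0:ℂ) ≤ (Bᴴ * B) j j := by
    intro j _
    rw [entry_eq_dotProduct]
    exact dotProduct_star_self_nonneg _
  have htr : ∑ j, (Bᴴ * B) j j = 0 := h
  have hz := (Finset.sum_eq_zero_iff_of_nonneg hdiag).mp htr
  ext i j
  have := hz j (Finset.mem_univ j)
  rw [entry_eq_dotProduct] at this
  have hv := dotProduct_star_self_eq_zero.mp this
  exact congrFun hv i

/-- If `Σᵢ Aᵢᴴ Dᵢ = 0`, then for every PSD `ρ_C` and every `σ`, the identity
`Σᵢ Dᵢ ρ_C Dᵢᴴ = −Σᵢ (Aᵢ σ Dᵢᴴ + Dᵢ σᴴ Aᵢᴴ)` forces `Σᵢ Dᵢ ρ_C Dᵢᴴ = 0`;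
and if moreover `ρ_C` is positive definite, then every `Dᵢ = 0`. -/
theorem interference_term_vanishes {p q k : ℕ}
    (A : Fin k → Matrix (Fin p) (Fin p) ℂ)
    (D : Fin k → Matrix (Fin p) (Fin q) ℂ)
    (horth : ∑ i, (A i)ᴴ * D i = 0)
    (ρC : Matrix (Fin q) (Fin q) ℂ) (hρC : ρC.PosSemidef)
    (σ : Matrix (Fin p) (Fin q) ℂ)
    (heq : ∑ i, D i * ρC * (D i)ᴴ =
      -∑ i, (A i * σ * (D i)ᴴ + D i * σᴴ * (A i)ᴴ)) :
    (∑ i, D i * ρC * (D i)ᴴ = 0) ∧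
    (ρC.PosDef → ∀ i, D i = 0) := by
  have horth' : ∑ i, (D i)ᴴ * A i = 0 := by
    have := congrArg Matrix.conjTranspose horth
    simpa [Matrix.conjTranspose_sum] using this
  -- trace of the RHS vanishes
  have htr : (∑ i, D i * ρC * (D i)ᴴ).trace = 0 := by
    rw [heq, Matrix.trace_neg, Matrix.trace_sum]
    have : ∀ i, (A i * σ * (D i)ᴴ + D i * σᴴ * (A i)ᴴ).trace =
        (σ * ((D i)ᴴ * A i)).trace + (σᴴ * ((A i)ᴴ * D i)).trace := by
      intro i
      rw [Matrix.trace_add]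
      congr 1
      · rw [Matrix.trace_mul_comm (A i * σ), ← Matrix.mul_assoc, Matrix.trace_mul_comm]
      · rw [Matrix.trace_mul_comm (D i * σᴴ), ← Matrix.mul_assoc, Matrix.trace_mul_comm]
    simp_rw [this]
    rw [Finset.sum_add_distrib]
    have h1 : ∑ i, (σ * ((D i)ᴴ * A i)).trace = 0 := by
      rw [← Matrix.trace_sum, ← Matrix.mul_sum, horth', Matrix.mul_zero, Matrix.trace_zero]
    have h2 : ∑ i, (σᴴ * ((A i)ᴴ * D i)).trace = 0 := by
      rw [← Matrix.trace_sum, ← Matrix.mul_sum, horth, Matrix.mul_zero, Matrix.trace_zero]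
    rw [h1, h2]
    simp
  have hPSDi : ∀ i, (D i * ρC * (D i)ᴴ).PosSemidef :=
    fun i => hρC.mul_mul_conjTranspose_same (D i)
  have hPSD : (∑ i, D i * ρC * (D i)ᴴ).PosSemidef := by
    classical
    exact Finset.sum_induction _ _ (fun a b ha hb => ha.add hb) Matrix.PosSemidef.zero
      (fun i _ => hPSDi i)
  have hsum0 : ∑ i, D i * ρC * (D i)ᴴ = 0 := psd_trace_zero hPSD htr
  refine ⟨hsum0, fun hPD i => ?_⟩
  -- each term has nonneg trace summing to zero
  have htri : ∀ j ∈ Finset.univ, (0:ℂ) ≤ (D j * ρC * (D j)ᴴ).trace := by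
    intro j _
    obtain ⟨B, hB⟩ := CStarAlgebra.nonneg_iff_eq_star_mul_self.mp (hPSDi j).nonneg
    rw [hB, Matrix.star_eq_conjTranspose]
    exact Finset.sum_nonneg fun a _ => by
      rw [Matrix.diag_apply, entry_eq_dotProduct]; exact dotProduct_star_self_nonneg _
  have hsumtr : ∑ j, (D j * ρC * (D j)ᴴ).trace = 0 := by
    rw [← Matrix.trace_sum, hsum0, Matrix.trace_zero]
  have hti : (D i * ρC * (D i)ᴴ).trace = 0 :=
    (Finset.sum_eq_zero_iff_of_nonneg htri).mp hsumtr i (Finset.mem_univ i)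
  have hzi : D i * ρC * (D i)ᴴ = 0 := psd_trace_zero (hPSDi i) hti
  -- use the square root of ρC
  set R := CFC.sqrt ρC with hR
  have hRR : R * R = ρC := CFC.sqrt_mul_sqrt_self ρC hρC.nonneg
  have hRH : Rᴴ = R := (CFC.sqrt_nonneg ρC).posSemidef.isHermitian
  have hDR : (D i * R) * (D i * R)ᴴ = 0 := by
    rw [Matrix.conjTranspose_mul, hRH, ← Matrix.mul_assoc, Matrix.mul_assoc (D i) R R, hRR]
    exact hzi
  have hDR0 : D i * R = 0 := Matrix.self_mul_conjTranspose_eq_zero.mp hDR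
  have hdet : IsUnit R.det := by
    have hdρ : ρC.det ≠ 0 := hPD.det_pos.ne'
    have : R.det * R.det = ρC.det := by rw [← Matrix.det_mul, hRR]
    exact isUnit_iff_ne_zero.mpr fun h => hdρ (by rw [← this, h, mul_zero])
  have := congrArg (· * R⁻¹) hDR0
  simpa [Matrix.mul_nonsing_inv_cancel_right _ _ hdet] using this
end
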